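/- Suppose Assumption A1 holds with λ ∈ (0,1/2). Then ζ₁(s)ζ₂'(s) − ζ₁'(s)ζ₂(s) = 1 for all s ≥ 0, lim_{s→∞} ζ₁(s)ζ₂'(s) = (1−λ)/(1−2λ), and consequently for every n ∈ ℤ there exists s₀ ≥ r₀ such that 1 + (n−1)ζ₁(s)ζ₂'(s) ≠ 0 for all s ≥ s₀. -/

import Mathlib

noncomputable section

open MeasureTheory Filter Real Set

/-- Euclidean space `ℝ^d`. -/
abbrev Ed (d : ℕ) : Type := EuclideanSpace ℝ (Fin d)

/-- Assumption A1 on the coefficient `σ` and the fundamental solutions `ζ₁, ζ₂` of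
`ζ'' + σ ζ = 0`, with the constants `c, σ₀, c₃` and `c1 k, c2 k` (k = 0,1,2). -/
structure A1 (σ ζ₁ ζ₂ : ℝ → ℝ) (lam r₀ c σ₀ c₃ : ℝ) (c1 c2 : ℕ → ℝ) : Prop where
  lam_nonneg : 0 ≤ lam
  lam_lt_half : lam < 1/2
  r₀_pos : 0 < r₀
  c_pos : 0 < c
  σ_cont : Continuous σ
  ζ₁_deriv : ∀ t, HasDerivAt ζ₁ (deriv ζ₁ t) t
  ζ₁_ode : ∀ t, HasDerivAt (deriv ζ₁) (-(σ t * ζ₁ t)) t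
  ζ₂_deriv : ∀ t, HasDerivAt ζ₂ (deriv ζ₂ t) t
  ζ₂_ode : ∀ t, HasDerivAt (deriv ζ₂) (-(σ t * ζ₂ t)) t
  ζ₁_init : ζ₁ 0 = 1
  ζ₁'_init : deriv ζ₁ 0 = 0
  ζ₂_init : ζ₂ 0 = 0
  ζ₂'_init : deriv ζ₂ 0 = 1
  c1_ne : ∀ k ≤ 2, c1 k ≠ 0
  c2_ne : ∀ k ≤ 2, c2 k ≠ 0
  σ_C1 : ContDiffOn ℝ 1 σ (Ici r₀)
  σ'_decay : Tendsto (fun t => t^3 * deriv σ t) atTop (nhds σ₀)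
  ζ₂_lower : ∀ t > r₀, c ≤ |ζ₂ t|
  ζ₁_asymp : ∀ k ≤ 2, Tendsto (fun t => |iteratedDeriv k ζ₁ t| / t ^ (lam - (k:ℝ))) atTop (nhds (c1 k))
  ζ₂_asymp : ∀ k ≤ 2, Tendsto (fun t => |iteratedDeriv k ζ₂ t| / t ^ (1 - lam - (k:ℝ))) atTop (nhds (c2 k))
  ζ₂_refined : Tendsto (fun t => |ζ₂ t - c2 0 * t ^ (1 - lam)| / t ^ lam) atTop (nhds c₃)
  ζ₁_nonneg : ∀ t > r₀, 0 ≤ ζ₁ t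
  ζ₂_nonneg : ∀ t > r₀, 0 ≤ ζ₂ t

/-- L'Hôpital-type lemma at infinity: if `v → ∞`, `v' > 0` eventually, and
`u'/v' → L`, then `u/v → L`. -/
lemma my_lhopital_atTop {u v u' v' : ℝ → ℝ} {L : ℝ}
    (hu : ∀ᶠ t in atTop, HasDerivAt u (u' t) t)
    (hv : ∀ᶠ t in atTop, HasDerivAt v (v' t) t)
    (hv' : ∀ᶠ t in atTop, 0 < v' t)
    (hvtop : Tendsto v atTop atTop)
    (h : Tendsto (fun t => u' t / v' t) atTop (nhds L)) :
    Tendsto (fun t => u t / v t) atTop (nhds L) := by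
  rw [Metric.tendsto_atTop]
  intro ε εpos
  have ε3 : (0:ℝ) < ε / 3 := by positivity
  obtain ⟨T₁, hT₁⟩ := Metric.tendsto_atTop.mp h (ε / 3) ε3
  obtain ⟨T₂, hT₂⟩ := eventually_atTop.mp (hu.and (hv.and hv'))
  set T := max T₁ T₂ with hTdef
  have derivs : ∀ t ≥ T, HasDerivAt u (u' t) t ∧ HasDerivAt v (v' t) t ∧ 0 < v' t :=
    fun t ht => hT₂ t (le_trans (le_max_right _ _) ht)
  have bound : ∀ t ≥ T, |u' t / v' t - L| < ε / 3 := fun t ht => by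
    have := hT₁ t (le_trans (le_max_left _ _) ht); rwa [Real.dist_eq] at this
  -- upper bound
  have upper : ∀ t ≥ T, u t - u T ≤ (L + ε / 3) * (v t - v T) := by
    intro t ht
    have mono : MonotoneOn (fun s => (L + ε / 3) * v s - u s) (Ici T) := by
      apply monotoneOn_of_hasDerivWithinAt_nonneg (convex_Ici T)
        (f' := fun s => (L + ε / 3) * v' s - u' s)
      · intro s hs
        exact (((derivs s hs).2.1.const_mul _).sub (derivs s hs).1).continuousAt.continuousWithinAt
      · intro s hs
        rw [interior_Ici] at hs
        exact (((derivs s hs.le).2.1.const_mul _).sub (derivs s hs.le).1).hasDerivWithinAt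
      · intro s hs
        rw [interior_Ici] at hs
        obtain ⟨_, _, hv'pos⟩ := derivs s hs.le
        have hb := (abs_lt.mp (bound s hs.le)).2
        have hlt : u' s / v' s < L + ε / 3 := by linarith
        nlinarith [(div_lt_iff₀ hv'pos).mp hlt]
    have := mono self_mem_Ici (mem_Ici.mpr ht) ht
    simp only at this
    nlinarith [this]
  have lower : ∀ t ≥ T, (L - ε / 3) * (v t - v T) ≤ u t - u T := by
    intro t ht
    have mono : MonotoneOn (fun s => u s - (L - ε / 3) * v s) (Ici T) := by
      apply monotoneOn_of_hasDerivWithinAt_nonneg (convex_Ici T)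
        (f' := fun s => u' s - (L - ε / 3) * v' s)
      · intro s hs
        exact ((derivs s hs).1.sub ((derivs s hs).2.1.const_mul _)).continuousAt.continuousWithinAt
      · intro s hs
        rw [interior_Ici] at hs
        exact ((derivs s hs.le).1.sub ((derivs s hs.le).2.1.const_mul _)).hasDerivWithinAt
      · intro s hs
        rw [interior_Ici] at hs
        obtain ⟨_, _, hv'pos⟩ := derivs s hs.le
        have hb := (abs_lt.mp (bound s hs.le)).1
        have hlt : L - ε / 3 < u' s / v' s := by linarith
        nlinarith [(lt_div_iff₀ hv'pos).mp hlt]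
    have := mono self_mem_Ici (mem_Ici.mpr ht) ht
    simp only at this
    nlinarith [this]
  -- finish
  obtain ⟨M, hMpos, hM1, hM2⟩ : ∃ M : ℝ, 0 < M ∧ u T - (L + ε / 3) * v T ≤ M ∧
      -M ≤ u T - (L - ε / 3) * v T :=
    ⟨|u T - (L + ε / 3) * v T| + |u T - (L - ε / 3) * v T| + 1, by positivity,
      by have h1 := le_abs_self (u T - (L + ε / 3) * v T)
         have h2 := abs_nonneg (u T - (L - ε / 3) * v T); linarith,
      by have h1 := neg_abs_le (u T - (L - ε / 3) * v T)
         have h2 := abs_nonneg (u T - (L + ε / 3) * v T); linarith⟩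
  obtain ⟨N, hN⟩ := eventually_atTop.mp
    ((hvtop.eventually_ge_atTop (max 1 (3 * M / ε))).and (eventually_ge_atTop T))
  refine ⟨N, fun t ht => ?_⟩
  obtain ⟨hvt, htT⟩ := hN t ht
  have hvt1 : (1:ℝ) ≤ v t := le_trans (le_max_left _ _) hvt
  have hvtM : 3 * M / ε ≤ v t := le_trans (le_max_right _ _) hvt
  have hvpos : (0:ℝ) < v t := by linarith
  have hMle : M ≤ ε / 3 * v t := by
    rw [div_le_iff₀ εpos] at hvtM
    linarith
  have hup : u t ≤ (L + ε / 3) * v t + M := by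
    have h1 := upper t htT
    nlinarith [hM1]
  have hlo : (L - ε / 3) * v t - M ≤ u t := by
    have h1 := lower t htT
    nlinarith [hM2]
  rw [Real.dist_eq, abs_lt]
  constructor
  · have h1 : (L - ε) * v t < u t := by nlinarith [mul_pos ε3 hvpos]
    have := (lt_div_iff₀ hvpos).mpr h1
    linarith
  · have h1 : u t < (L + ε) * v t := by nlinarith [mul_pos ε3 hvpos]
    have := (div_lt_iff₀ hvpos).mpr h1
    linarith

/-- If `φ → ∞`, `φ'` is continuous and eventually nonvanishing, then `φ' > 0` eventually. -/
lemma my_ev_pos_deriv {φ φ' : ℝ → ℝ} (hd : ∀ t, HasDerivAt φ (φ' t) t)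
    (hc : Continuous φ') (htop : Tendsto φ atTop atTop)
    (hne : ∀ᶠ t in atTop, φ' t ≠ 0) : ∀ᶠ t in atTop, 0 < φ' t := by
  obtain ⟨T, hT⟩ := eventually_atTop.mp hne
  rw [eventually_atTop]
  refine ⟨T, fun t ht => ?_⟩
  by_contra hle
  push_neg at hle
  have hneg : φ' t < 0 := lt_of_le_of_ne hle (hT t ht)
  have hall : ∀ s ≥ t, φ' s < 0 := by
    intro s hs
    by_contra h2
    push_neg at h2
    have hpos : 0 < φ' s := lt_of_le_of_ne h2 (Ne.symm (hT s (le_trans ht hs)))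
    have hmem : (0:ℝ) ∈ Icc (φ' t) (φ' s) := ⟨hneg.le, hpos.le⟩
    obtain ⟨x, hx, hx0⟩ := intermediate_value_Icc hs hc.continuousOn hmem
    exact hT x (le_trans ht hx.1) hx0
  have anti : StrictAntiOn φ (Ici t) := by
    apply strictAntiOn_of_deriv_neg (convex_Ici t)
      (fun s _ => (hd s).differentiableAt.continuousAt.continuousWithinAt)
    intro x hx
    rw [interior_Ici] at hx
    rw [(hd x).deriv]
    exact hall x hx.le
  obtain ⟨N, hN⟩ := eventually_atTop.mp (htop.eventually_gt_atTop (φ t))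
  have h1 : t < max N (t + 1) := lt_of_lt_of_le (by linarith) (le_max_right _ _)
  have h2 : φ (max N (t + 1)) < φ t := anti self_mem_Ici (mem_Ici.mpr h1.le) h1
  have h3 := hN (max N (t + 1)) (le_max_left _ _)
  linarith


/-- the Wronskian identity, the limit of `ζ₁ ζ₂'`, and the eventual
non-vanishing of `1 + (n-1) ζ₁ ζ₂'`. -/
theorem statement6
    (σ ζ₁ ζ₂ : ℝ → ℝ) (lam r₀ c σ₀ c₃ : ℝ) (c1 c2 : ℕ → ℝ)
    (hA1 : A1 σ ζ₁ ζ₂ lam r₀ c σ₀ c₃ c1 c2) (hlam : 0 < lam) :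
    (∀ s : ℝ, 0 ≤ s → ζ₁ s * deriv ζ₂ s - deriv ζ₁ s * ζ₂ s = 1) ∧
    Tendsto (fun s => ζ₁ s * deriv ζ₂ s) atTop (nhds ((1 - lam)/(1 - 2*lam))) ∧
    (∀ n : ℤ, ∃ s₀ ≥ r₀, ∀ s ≥ s₀, 1 + ((n:ℝ) - 1) * ζ₁ s * deriv ζ₂ s ≠ 0) := by
  have hl2 : 0 < 1 - 2 * lam := by linarith [hA1.lam_lt_half]
  have hl1 : 0 < 1 - lam := by linarith [hA1.lam_lt_half]
  -- Wronskian
  have wron : ∀ s : ℝ, ζ₁ s * deriv ζ₂ s - deriv ζ₁ s * ζ₂ s = 1 := by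
    have hder : ∀ s, HasDerivAt (fun s => ζ₁ s * deriv ζ₂ s - deriv ζ₁ s * ζ₂ s) 0 s := by
      intro s
      have h1 := (hA1.ζ₁_deriv s).mul (hA1.ζ₂_ode s)
      have h2 := (hA1.ζ₁_ode s).mul (hA1.ζ₂_deriv s)
      have h3 := h1.sub h2
      convert h3 using 1
      · rfl
      · rfl
      · rfl
      ring
    intro s
    have hconst := is_const_of_deriv_eq_zero (fun x => (hder x).differentiableAt)
      (fun x => (hder x).deriv) s 0
    simp only [hA1.ζ₁_init, hA1.ζ₁'_init, hA1.ζ₂_init, hA1.ζ₂'_init] at hconst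
    simpa using hconst
  -- raw asymptotics in convenient form
  have h10 : Tendsto (fun t => |ζ₁ t| / t ^ lam) atTop (nhds (c1 0)) := by
    have := hA1.ζ₁_asymp 0 (by norm_num)
    simpa [iteratedDeriv_zero] using this
  have h11 : Tendsto (fun t => |deriv ζ₁ t| / t ^ (lam - 1)) atTop (nhds (c1 1)) := by
    have := hA1.ζ₁_asymp 1 (by norm_num)
    simpa [iteratedDeriv_one] using this
  have h20 : Tendsto (fun t => |ζ₂ t| / t ^ (1 - lam)) atTop (nhds (c2 0)) := by
    have := hA1.ζ₂_asymp 0 (by norm_num)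
    simpa [iteratedDeriv_zero] using this
  have h21 : Tendsto (fun t => |deriv ζ₂ t| / t ^ (-lam)) atTop (nhds (c2 1)) := by
    have := hA1.ζ₂_asymp 1 (by norm_num)
    have he : 1 - lam - (1:ℝ) = -lam := by ring
    simpa [iteratedDeriv_one, he] using this
  -- positivity of the constants
  have habs_nonneg : ∀ (f : ℝ → ℝ) (e : ℝ), ∀ᶠ t in atTop, 0 ≤ |f t| / t ^ e := by
    intro f e
    filter_upwards [eventually_gt_atTop (0:ℝ)] with t ht
    exact div_nonneg (abs_nonneg _) (rpow_pos_of_pos ht e).le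
  have hc10 : 0 < c1 0 :=
    lt_of_le_of_ne (ge_of_tendsto h10 (habs_nonneg ζ₁ lam)) (Ne.symm (hA1.c1_ne 0 (by norm_num)))
  have hc11 : 0 < c1 1 :=
    lt_of_le_of_ne (ge_of_tendsto h11 (habs_nonneg _ _)) (Ne.symm (hA1.c1_ne 1 (by norm_num)))
  have hc20 : 0 < c2 0 :=
    lt_of_le_of_ne (ge_of_tendsto h20 (habs_nonneg _ _)) (Ne.symm (hA1.c2_ne 0 (by norm_num)))
  have hc21 : 0 < c2 1 :=
    lt_of_le_of_ne (ge_of_tendsto h21 (habs_nonneg _ _)) (Ne.symm (hA1.c2_ne 1 (by norm_num)))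
  -- signed asymptotics for ζ₁ and ζ₂
  have h10s : Tendsto (fun t => ζ₁ t / t ^ lam) atTop (nhds (c1 0)) := by
    apply h10.congr'
    filter_upwards [eventually_gt_atTop r₀] with t ht
    rw [abs_of_nonneg (hA1.ζ₁_nonneg t ht)]
  have h20s : Tendsto (fun t => ζ₂ t / t ^ (1 - lam)) atTop (nhds (c2 0)) := by
    apply h20.congr'
    filter_upwards [eventually_gt_atTop r₀] with t ht
    rw [abs_of_nonneg (hA1.ζ₂_nonneg t ht)]
  -- ζ₁ and ζ₂ tend to infinity
  have hζ₁top : Tendsto ζ₁ atTop atTop := by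
    have := h10s.pos_mul_atTop hc10 (tendsto_rpow_atTop hlam)
    apply this.congr'
    filter_upwards [eventually_gt_atTop (0:ℝ)] with t ht
    field_simp
  have hζ₂top : Tendsto ζ₂ atTop atTop := by
    have := h20s.pos_mul_atTop hc20 (tendsto_rpow_atTop hl1)
    apply this.congr'
    filter_upwards [eventually_gt_atTop (0:ℝ)] with t ht
    field_simp
  -- continuity of the derivatives
  have hcont1 : Continuous (deriv ζ₁) :=
    continuous_iff_continuousAt.mpr fun t => (hA1.ζ₁_ode t).differentiableAt.continuousAt
  have hcont2 : Continuous (deriv ζ₂) :=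
    continuous_iff_continuousAt.mpr fun t => (hA1.ζ₂_ode t).differentiableAt.continuousAt
  -- eventual nonvanishing of the derivatives
  have hne_of : ∀ (f : ℝ → ℝ) (e C : ℝ), 0 < C →
      Tendsto (fun t => |f t| / t ^ e) atTop (nhds C) → ∀ᶠ t in atTop, f t ≠ 0 := by
    intro f e C hC hten
    filter_upwards [hten.eventually (eventually_gt_nhds (half_lt_self hC))] with t ht hf0
    rw [hf0] at ht
    simp at ht
    linarith [half_pos hC]
  have hne1 : ∀ᶠ t in atTop, deriv ζ₁ t ≠ 0 := hne_of _ _ _ hc11 h11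
  have hne2 : ∀ᶠ t in atTop, deriv ζ₂ t ≠ 0 := hne_of _ _ _ hc21 h21
  -- eventual positivity of the derivatives
  have hpos1 : ∀ᶠ t in atTop, 0 < deriv ζ₁ t :=
    my_ev_pos_deriv hA1.ζ₁_deriv hcont1 hζ₁top hne1
  have hpos2 : ∀ᶠ t in atTop, 0 < deriv ζ₂ t :=
    my_ev_pos_deriv hA1.ζ₂_deriv hcont2 hζ₂top hne2
  -- signed asymptotics for the derivatives
  have h11s : Tendsto (fun t => deriv ζ₁ t / t ^ (lam - 1)) atTop (nhds (c1 1)) := by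
    apply h11.congr'
    filter_upwards [hpos1] with t ht
    rw [abs_of_pos ht]
  have h21s : Tendsto (fun t => deriv ζ₂ t / t ^ (-lam)) atTop (nhds (c2 1)) := by
    apply h21.congr'
    filter_upwards [hpos2] with t ht
    rw [abs_of_pos ht]
  -- L'Hôpital relations
  have capp2 : Tendsto (fun t => ζ₂ t / t ^ (1 - lam)) atTop (nhds (c2 1 / (1 - lam))) := by
    apply my_lhopital_atTop (u' := deriv ζ₂) (v' := fun t => (1 - lam) * t ^ ((1 - lam) - 1))
    · exact Eventually.of_forall hA1.ζ₂_deriv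
    · filter_upwards [eventually_gt_atTop (0:ℝ)] with t ht
      exact Real.hasDerivAt_rpow_const (Or.inl ht.ne')
    · filter_upwards [eventually_gt_atTop (0:ℝ)] with t ht
      exact mul_pos hl1 (rpow_pos_of_pos ht _)
    · exact tendsto_rpow_atTop hl1
    · have heq : (fun t => deriv ζ₂ t / ((1 - lam) * t ^ ((1 - lam) - 1)))
          =ᶠ[atTop] fun t => (deriv ζ₂ t / t ^ (-lam)) / (1 - lam) := by
        filter_upwards with t
        rw [show (1 - lam) - 1 = -lam by ring, div_mul_eq_div_div_swap]
      exact Tendsto.congr' heq.symm (h21s.div_const _)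
  have capp1 : Tendsto (fun t => ζ₁ t / t ^ lam) atTop (nhds (c1 1 / lam)) := by
    apply my_lhopital_atTop (u' := deriv ζ₁) (v' := fun t => lam * t ^ (lam - 1))
    · exact Eventually.of_forall hA1.ζ₁_deriv
    · filter_upwards [eventually_gt_atTop (0:ℝ)] with t ht
      exact Real.hasDerivAt_rpow_const (Or.inl ht.ne')
    · filter_upwards [eventually_gt_atTop (0:ℝ)] with t ht
      exact mul_pos hlam (rpow_pos_of_pos ht _)
    · exact tendsto_rpow_atTop hlam
    · have heq : (fun t => deriv ζ₁ t / (lam * t ^ (lam - 1)))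
          =ᶠ[atTop] fun t => (deriv ζ₁ t / t ^ (lam - 1)) / lam := by
        filter_upwards with t
        rw [div_mul_eq_div_div_swap]
      exact Tendsto.congr' heq.symm (h11s.div_const _)
  have e2 : c2 1 = (1 - lam) * c2 0 := by
    have := tendsto_nhds_unique h20s capp2
    field_simp at this ⊢
    linarith
  have e1 : c1 1 = lam * c1 0 := by
    have := tendsto_nhds_unique h10s capp1
    field_simp at this ⊢
    linarith
  -- limits of the products
  have hf : Tendsto (fun s => ζ₁ s * deriv ζ₂ s) atTop (nhds (c1 0 * c2 1)) := by
    apply (h10s.mul h21s).congr'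
    filter_upwards [eventually_gt_atTop (0:ℝ)] with t ht
    rw [div_mul_div_comm, ← Real.rpow_add ht, add_neg_cancel, Real.rpow_zero, div_one]
  have hg : Tendsto (fun s => deriv ζ₁ s * ζ₂ s) atTop (nhds (c1 1 * c2 0)) := by
    apply (h11s.mul h20s).congr'
    filter_upwards [eventually_gt_atTop (0:ℝ)] with t ht
    rw [div_mul_div_comm, ← Real.rpow_add ht,
      show lam - 1 + (1 - lam) = 0 by ring, Real.rpow_zero, div_one]
  -- the Wronskian relation in the limit
  have hrel : c1 0 * c2 1 - c1 1 * c2 0 = 1 := by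
    have h1 : Tendsto (fun s => ζ₁ s * deriv ζ₂ s - deriv ζ₁ s * ζ₂ s) atTop (nhds 1) := by
      simp only [wron]
      exact tendsto_const_nhds
    exact tendsto_nhds_unique (hf.sub hg) h1
  have hval : c1 0 * c2 1 = (1 - lam) / (1 - 2 * lam) := by
    rw [e1, e2] at hrel
    rw [e2]
    rw [eq_div_iff hl2.ne']
    linear_combination (1 - lam) * hrel
  rw [hval] at hf
  refine ⟨fun s _ => wron s, hf, ?_⟩
  -- third part
  intro n
  have hLn : 1 + ((n:ℝ) - 1) * ((1 - lam) / (1 - 2 * lam)) ≠ 0 := by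
    intro hcon
    have hkey : (1 - 2 * lam) + ((n:ℝ) - 1) * (1 - lam) = 0 := by
      have h3 := congrArg (· * (1 - 2 * lam)) hcon
      simp only [add_mul, mul_assoc, div_mul_cancel₀ _ hl2.ne', one_mul, zero_mul] at h3
      linarith
    rcases le_or_gt (n:ℝ) 0 with hn | hn
    · nlinarith
    · have hn1 : (1:ℝ) ≤ (n:ℝ) := by
        have : 0 < n := by exact_mod_cast hn
        exact_mod_cast this
      nlinarith
  have hlim : Tendsto (fun s => 1 + ((n:ℝ) - 1) * ζ₁ s * deriv ζ₂ s) atTop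
      (nhds (1 + ((n:ℝ) - 1) * ((1 - lam) / (1 - 2 * lam)))) := by
    have h0 : Tendsto (fun _ : ℝ => (1:ℝ)) atTop (nhds 1) := tendsto_const_nhds
    have := h0.add (hf.const_mul ((n:ℝ) - 1))
    apply this.congr
    intro s
    ring
  obtain ⟨T, hT⟩ := eventually_atTop.mp (hlim.eventually_ne hLn)
  exact ⟨max T r₀, le_max_right _ _, fun s hs => hT s (le_trans (le_max_left _ _) hs)⟩
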